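/- For any matrix X and any invertible density operator ρ, the trace norm of X is bounded by the Bures metric: ‖X‖₁² ≤ 2⟨X, (L_ρ + R_ρ)^{-1}X⟩, where L_ρ(A) = ρA and R_ρ(A) = Aρ, and ⟨·,·⟩ is the Hilbert–Schmidt inner product. -/

import Mathlib

open scoped Matrix ComplexOrder

section Helpers

lemma trace_ctm {d : ℕ} (A B : Matrix (Fin d) (Fin d) ℂ) :
    (Aᴴ * B).trace = ∑ p : Fin d × Fin d, (starRingEnd ℂ) (A p.1 p.2) * B p.1 p.2 := by
  rw [Matrix.trace, Fintype.sum_prod_type]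
  simp only [Matrix.diag, Matrix.mul_apply, Matrix.conjTranspose_apply]
  exact Finset.sum_comm

lemma trace_self_re {d : ℕ} (A : Matrix (Fin d) (Fin d) ℂ) :
    (Aᴴ * A).trace.re = ∑ p : Fin d × Fin d, ‖A p.1 p.2‖ ^ 2 := by
  rw [trace_ctm, Complex.re_sum]
  refine Finset.sum_congr rfl fun p _ => ?_
  rw [mul_comm, Complex.mul_conj']
  rw [← Complex.ofReal_pow, Complex.ofReal_re]

lemma trace_self_re_nonneg {d : ℕ} (A : Matrix (Fin d) (Fin d) ℂ) :
    0 ≤ (Aᴴ * A).trace.re := by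
  rw [trace_self_re]; positivity

/-- Cauchy–Schwarz for the Hilbert–Schmidt inner product. -/
lemma cs_trace {d : ℕ} (A B : Matrix (Fin d) (Fin d) ℂ) :
    ‖(Aᴴ * B).trace‖ ^ 2 ≤ (Aᴴ * A).trace.re * (Bᴴ * B).trace.re := by
  rw [trace_ctm, trace_self_re, trace_self_re]
  calc ‖∑ p : Fin d × Fin d, (starRingEnd ℂ) (A p.1 p.2) * B p.1 p.2‖ ^ 2
      ≤ (∑ p : Fin d × Fin d, ‖A p.1 p.2‖ * ‖B p.1 p.2‖) ^ 2 := by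
        refine pow_le_pow_left₀ (norm_nonneg _) ?_ 2
        calc ‖∑ p : Fin d × Fin d, (starRingEnd ℂ) (A p.1 p.2) * B p.1 p.2‖
            ≤ ∑ p : Fin d × Fin d, ‖(starRingEnd ℂ) (A p.1 p.2) * B p.1 p.2‖ :=
              norm_sum_le _ _
          _ = ∑ p : Fin d × Fin d, ‖A p.1 p.2‖ * ‖B p.1 p.2‖ := by
              simp [norm_mul]
    _ ≤ _ := Finset.sum_mul_sq_le_sq_mul_sq _ _ _

lemma psd_trace_re_nonneg {d : ℕ} {M : Matrix (Fin d) (Fin d) ℂ} (hM : M.PosSemidef) :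
    0 ≤ M.trace.re := by
  exact (Complex.nonneg_iff.mp hM.trace_nonneg).1

/-- If `Q` is a Hermitian idempotent and `S` is Hermitian then `tr(SQS) ≤ tr(S*S)`. -/
lemma proj_trace_bound {d : ℕ} (S Q : Matrix (Fin d) (Fin d) ℂ)
    (hS : Sᴴ = S) (hQH : Qᴴ = Q) (hQ : Q * Q = Q) :
    (S * Q * S).trace.re ≤ (S * S).trace.re := by
  have h1 : (1 - Q) = (1 - Q)ᴴ * (1 - Q) := by
    rw [Matrix.conjTranspose_sub, Matrix.conjTranspose_one, hQH, Matrix.sub_mul,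
      Matrix.mul_sub, Matrix.mul_sub, hQ]
    simp [Matrix.mul_one, Matrix.one_mul]
  have hpsd : ((1 : Matrix (Fin d) (Fin d) ℂ) - Q).PosSemidef := by
    rw [h1]; exact Matrix.posSemidef_conjTranspose_mul_self _
  have h2 : (Sᴴ * (1 - Q) * S).PosSemidef := hpsd.conjTranspose_mul_mul_same S
  have h3 : Sᴴ * (1 - Q) * S = S * S - S * Q * S := by
    rw [hS, Matrix.mul_sub, Matrix.sub_mul, Matrix.mul_one]
  have h4 := psd_trace_re_nonneg h2
  rw [h3, Matrix.trace_sub, Complex.sub_re] at h4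
  linarith

lemma cycle3 {d : ℕ} (A B C : Matrix (Fin d) (Fin d) ℂ) :
    (A * (B * C)).trace = (C * (A * B)).trace := by
  rw [← Matrix.mul_assoc, Matrix.trace_mul_comm]

end Helpers

/-- The trace (Schatten-1) norm `‖X‖₁ = tr √(XᴴX)`. -/
noncomputable def traceNorm {d : ℕ} (X : Matrix (Fin d) (Fin d) ℂ) : ℝ :=
  (((Matrix.posSemidef_conjTranspose_mul_self X).1.eigenvectorUnitary : Matrix (Fin d) (Fin d) ℂ) *
      Matrix.diagonal (((↑) : ℝ → ℂ) ∘ Real.sqrt ∘ (Matrix.posSemidef_conjTranspose_mul_self X).1.eigenvalues) *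
      (star (Matrix.posSemidef_conjTranspose_mul_self X).1.eigenvectorUnitary :
        Matrix (Fin d) (Fin d) ℂ)).trace.re

/-- for any matrix `X` and any invertible density operator `ρ`,
`‖X‖₁² ≤ 2⟨X, (L_ρ + R_ρ)⁻¹ X⟩`; here `Y = (L_ρ + R_ρ)⁻¹ X` is the solution of
`ρY + Yρ = X`, and `⟨X, Y⟩ = tr(Xᴴ Y)` is the Hilbert–Schmidt inner product. -/
theorem stmt5 {d : ℕ} (ρ X Y : Matrix (Fin d) (Fin d) ℂ)
    (hρ : ρ.PosDef) (htr : ρ.trace = 1)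
    (hY : ρ * Y + Y * ρ = X) :
    traceNorm X ^ 2 ≤ 2 * (Matrix.trace (Xᴴ * Y)).re := by
  classical
  unfold traceNorm
  set h : (Xᴴ * X).PosSemidef := Matrix.posSemidef_conjTranspose_mul_self X with hdef
  set V : Matrix (Fin d) (Fin d) ℂ := (h.1.eigenvectorUnitary : Matrix (Fin d) (Fin d) ℂ)
    with hVdef
  have hVl : Vᴴ * V = 1 := by
    rw [← Matrix.star_eq_conjTranspose]; exact Matrix.UnitaryGroup.star_mul_self _
  set lam : Fin d → ℝ := h.1.eigenvalues with hlamdef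
  have hlam : ∀ i, 0 ≤ lam i := h.eigenvalues_nonneg
  set s : Fin d → ℝ := fun i => Real.sqrt (lam i) with hsdef
  have hsqrt : ((h.1.eigenvectorUnitary : Matrix (Fin d) (Fin d) ℂ) *
      Matrix.diagonal (((↑) : ℝ → ℂ) ∘ Real.sqrt ∘ h.1.eigenvalues) *
      (star h.1.eigenvectorUnitary : Matrix (Fin d) (Fin d) ℂ)) = V * Matrix.diagonal (fun i => ((s i : ℝ) : ℂ)) * Vᴴ := rfl
  have hspec : Xᴴ * X = V * Matrix.diagonal (fun i => ((lam i : ℝ) : ℂ)) * Vᴴ := by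
    exact h.1.spectral_theorem
  -- pointwise scalar facts
  set g : Fin d → ℂ := fun i => if s i = 0 then 0 else ((s i : ℂ))⁻¹ with hgdef
  have kd : ∀ i, ((lam i : ℝ) : ℂ) = (s i : ℂ) * (s i : ℂ) := by
    intro i
    have : s i * s i = lam i := Real.mul_self_sqrt (hlam i)
    rw [← this]; push_cast; ring
  have hsne : ∀ i, s i ≠ 0 → ((s i : ℝ) : ℂ) ≠ 0 := fun i hi => by exact_mod_cast hi
  have k1 : ∀ i, g i * ((lam i : ℝ) : ℂ) = ((s i : ℝ) : ℂ) := by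
    intro i
    by_cases hi : s i = 0
    · simp [hgdef, hi]
    · rw [hgdef]; simp only [hi, if_false]; rw [kd i]
      field_simp
  have k2 : ∀ i, g i * (((lam i : ℝ) : ℂ) * g i) = if s i = 0 then 0 else 1 := by
    intro i
    by_cases hi : s i = 0
    · simp [hgdef, hi]
    · rw [hgdef]; simp only [hi, if_false]; rw [kd i]
      field_simp [hsne i hi]
  have k3 : ∀ i, (g i * g i) * (((lam i : ℝ) : ℂ) * (g i * g i)) = g i * g i := by
    intro i
    by_cases hi : s i = 0
    · simp [hgdef, hi]
    · rw [hgdef]; simp only [hi, if_false]; rw [kd i]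
      field_simp [hsne i hi]
  set G : Matrix (Fin d) (Fin d) ℂ := Matrix.diagonal g with hGdef
  have hstarg : star g = g := by
    funext i
    by_cases hi : s i = 0 <;>
      simp [hgdef, hi, ← Complex.ofReal_inv, Complex.conj_ofReal]
  have hGH : Gᴴ = G := by
    rw [hGdef, Matrix.diagonal_conjTranspose, hstarg]
  -- canonical rewriting helpers
  have hcan : ∀ M : Matrix (Fin d) (Fin d) ℂ, Vᴴ * (V * M) = M := fun M => by
    rw [← Matrix.mul_assoc, hVl, Matrix.one_mul]
  have hspecR : ∀ M : Matrix (Fin d) (Fin d) ℂ,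
      Xᴴ * (X * M) = V * (Matrix.diagonal (fun i => ((lam i : ℝ) : ℂ)) * (Vᴴ * M)) := by
    intro M
    rw [← Matrix.mul_assoc, hspec]
    simp only [Matrix.mul_assoc]
  have hdiag : ∀ (f f' : Fin d → ℂ) (M : Matrix (Fin d) (Fin d) ℂ),
      Matrix.diagonal f * (Matrix.diagonal f' * M)
        = Matrix.diagonal (fun i => f i * f' i) * M := by
    intro f f' M
    rw [← Matrix.mul_assoc, Matrix.diagonal_mul_diagonal]
  -- the partial isometry W
  set W : Matrix (Fin d) (Fin d) ℂ := X * V * G * Vᴴ with hW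
  have hWH : Wᴴ = V * (G * (Vᴴ * Xᴴ)) := by
    rw [hW]
    simp only [Matrix.conjTranspose_mul, Matrix.conjTranspose_conjTranspose, hGH,
      Matrix.mul_assoc]
  -- trace of Wᴴ X
  have htrW : (Wᴴ * X).trace = ((∑ i, s i : ℝ) : ℂ) := by
    have e1 : Wᴴ * X = V * (Matrix.diagonal (fun i => g i * ((lam i : ℝ) : ℂ)) * Vᴴ) := by
      rw [hWH]
      simp only [Matrix.mul_assoc]
      rw [hspec]
      simp only [Matrix.mul_assoc, hcan, hdiag, hGdef]
    rw [e1, ← Matrix.mul_assoc, Matrix.trace_mul_cycle, hVl,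
      Matrix.one_mul, Matrix.trace_diagonal]
    rw [show (∑ i, g i * ((lam i : ℝ) : ℂ)) = ∑ i, ((s i : ℝ) : ℂ) from
      Finset.sum_congr rfl fun i _ => k1 i]
    push_cast; rfl
  -- WᴴW and WWᴴ are Hermitian idempotents
  have hQ2H : (Wᴴ * W)ᴴ = Wᴴ * W := by
    simp [Matrix.conjTranspose_mul]
  have hQ2 : Wᴴ * W
      = V * (Matrix.diagonal (fun i => g i * (((lam i : ℝ) : ℂ) * g i)) * Vᴴ) := by
    rw [hWH, hW]
    simp only [Matrix.mul_assoc, hspecR, hcan, hdiag, hGdef]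
  have hfe2 : (fun i => g i * (((lam i : ℝ) : ℂ) * g i))
      = fun i => (if s i = 0 then (0 : ℂ) else 1) := funext k2
  have hQ2e : Wᴴ * W
      = V * (Matrix.diagonal (fun i => (if s i = 0 then (0 : ℂ) else 1)) * Vᴴ) := by
    rw [hQ2, hfe2]
  have hQ2idem : (Wᴴ * W) * (Wᴴ * W) = Wᴴ * W := by
    rw [hQ2e]
    simp only [Matrix.mul_assoc, hcan, hdiag]
    rw [show (fun i => (if s i = 0 then (0 : ℂ) else 1) * (if s i = 0 then (0 : ℂ) else 1))
        = fun i => (if s i = 0 then (0 : ℂ) else 1) from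
      funext fun i => by by_cases hi : s i = 0 <;> simp [hi]]
  have hQ1H : (W * Wᴴ)ᴴ = W * Wᴴ := by
    simp [Matrix.conjTranspose_mul]
  have hQ1idem : (W * Wᴴ) * (W * Wᴴ) = W * Wᴴ := by
    have hWWH : W * Wᴴ
        = X * (V * (Matrix.diagonal (fun i => g i * g i) * (Vᴴ * Xᴴ))) := by
      rw [hWH, hW]
      simp only [Matrix.mul_assoc, hcan, hdiag, hGdef]
    rw [hWWH]
    simp only [Matrix.mul_assoc, hspecR, hcan, hdiag]
    rw [show (fun i => g i * g i * (((lam i : ℝ) : ℂ) * (g i * g i)))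
        = fun i => g i * g i from funext k3]
  -- square root of ρ
  set U : Matrix (Fin d) (Fin d) ℂ := (hρ.1.eigenvectorUnitary : Matrix (Fin d) (Fin d) ℂ)
    with hUdef
  have hUl : Uᴴ * U = 1 := by
    rw [← Matrix.star_eq_conjTranspose]; exact Matrix.UnitaryGroup.star_mul_self _
  set S : Matrix (Fin d) (Fin d) ℂ :=
    U * Matrix.diagonal (fun i => ((Real.sqrt (hρ.1.eigenvalues i) : ℝ) : ℂ)) * Uᴴ with hSdef
  have hSH : Sᴴ = S := by
    rw [hSdef]
    simp [Matrix.conjTranspose_mul, Matrix.diagonal_conjTranspose, Matrix.mul_assoc,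
      Pi.star_def, Complex.conj_ofReal]
  have hSS : S * S = ρ := by
    have hsp : ρ = U * Matrix.diagonal (fun i => ((hρ.1.eigenvalues i : ℝ) : ℂ)) * Uᴴ :=
      hρ.1.spectral_theorem
    rw [hSdef]
    conv_rhs => rw [hsp]
    simp only [Matrix.mul_assoc]
    rw [← Matrix.mul_assoc Uᴴ U, hUl, Matrix.one_mul, ← Matrix.mul_assoc (Matrix.diagonal _),
      Matrix.diagonal_mul_diagonal]
    simp only [← Complex.ofReal_mul, Real.mul_self_sqrt, hρ.posSemidef.eigenvalues_nonneg]
  have hρS : ∀ M : Matrix (Fin d) (Fin d) ℂ, S * (S * M) = ρ * M := fun M => by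
    rw [← Matrix.mul_assoc, hSS]
  have htrρ : (S * S).trace.re = 1 := by rw [hSS, htr]; rfl
  -- trace of ρ times a Hermitian idempotent is at most 1
  have bound_proj : ∀ Q : Matrix (Fin d) (Fin d) ℂ, Qᴴ = Q → Q * Q = Q →
      (ρ * Q).trace.re ≤ 1 := by
    intro Q hQH hQidem
    have key : (ρ * Q).trace = ((S * Q) * S).trace := by
      rw [← hSS, Matrix.mul_assoc S S Q, Matrix.trace_mul_comm]
    have := proj_trace_bound S Q hSH hQH hQidem
    rw [key]
    calc ((S * Q) * S).trace.re ≤ (S * S).trace.re := this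
      _ = 1 := htrρ
  -- the two Cauchy–Schwarz estimates
  set a : ℝ := ((S * Y)ᴴ * (S * Y)).trace.re with hadef
  set b : ℝ := ((Y * S)ᴴ * (Y * S)).trace.re with hbdef
  have ha : 0 ≤ a := trace_self_re_nonneg _
  have hb : 0 ≤ b := trace_self_re_nonneg _
  have cs1 : (Wᴴ * (ρ * Y)).trace.re ≤ Real.sqrt a := by
    have e1 : (S * W)ᴴ * (S * Y) = Wᴴ * (ρ * Y) := by
      rw [Matrix.conjTranspose_mul, hSH, Matrix.mul_assoc, hρS]
    have e2 : (S * W)ᴴ * (S * W) = Wᴴ * (ρ * W) := by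
      rw [Matrix.conjTranspose_mul, hSH, Matrix.mul_assoc, hρS]
    have hcs := cs_trace (S * W) (S * Y)
    rw [e1, e2] at hcs
    have hc1 : (Wᴴ * (ρ * W)).trace.re ≤ 1 := by
      rw [cycle3 Wᴴ ρ W, cycle3 W Wᴴ ρ]
      exact bound_proj (W * Wᴴ) hQ1H hQ1idem
    have h1 : ‖(Wᴴ * (ρ * Y)).trace‖ ^ 2 ≤ a := by nlinarith [sq_nonneg ‖(Wᴴ * (ρ * Y)).trace‖]
    have h2 : ‖(Wᴴ * (ρ * Y)).trace‖ ≤ Real.sqrt a := by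
      rw [← Real.sqrt_sq (norm_nonneg _)]
      exact Real.sqrt_le_sqrt h1
    exact le_trans (Complex.re_le_norm _) h2
  have cs2 : (Wᴴ * (Y * ρ)).trace.re ≤ Real.sqrt b := by
    have e1 : (W * S)ᴴ * (Y * S) = S * (Wᴴ * (Y * S)) := by
      rw [Matrix.conjTranspose_mul, hSH, Matrix.mul_assoc]
    have e2 : (W * S)ᴴ * (W * S) = S * (Wᴴ * (W * S)) := by
      rw [Matrix.conjTranspose_mul, hSH, Matrix.mul_assoc]
    have t1 : (S * (Wᴴ * (Y * S))).trace = (Wᴴ * (Y * ρ)).trace := by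
      rw [cycle3 S Wᴴ (Y * S), Matrix.mul_assoc Y S (S * Wᴴ), hρS, cycle3 Y ρ Wᴴ]
    have t2 : (S * (Wᴴ * (W * S))).trace.re ≤ 1 := by
      rw [cycle3 S Wᴴ (W * S), Matrix.mul_assoc W S (S * Wᴴ), hρS, cycle3 W ρ Wᴴ,
        cycle3 Wᴴ W ρ]
      exact bound_proj (Wᴴ * W) hQ2H hQ2idem
    have hcs := cs_trace (W * S) (Y * S)
    rw [e1, e2, t1] at hcs
    have h1 : ‖(Wᴴ * (Y * ρ)).trace‖ ^ 2 ≤ b := by nlinarith [sq_nonneg ‖(Wᴴ * (Y * ρ)).trace‖]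
    have h2 : ‖(Wᴴ * (Y * ρ)).trace‖ ≤ Real.sqrt b := by
      rw [← Real.sqrt_sq (norm_nonneg _)]
      exact Real.sqrt_le_sqrt h1
    exact le_trans (Complex.re_le_norm _) h2
  -- the trace norm is at most √a + √b
  have hsplit : (Wᴴ * X).trace = (Wᴴ * (ρ * Y)).trace + (Wᴴ * (Y * ρ)).trace := by
    conv_lhs => rw [← hY]
    rw [Matrix.mul_add, Matrix.trace_add]
  have tbound : (∑ i, s i) ≤ Real.sqrt a + Real.sqrt b := by
    have := congrArg Complex.re hsplit
    rw [htrW, Complex.add_re, Complex.ofReal_re] at this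
    rw [this]
    exact add_le_add cs1 cs2
  -- the right-hand side equals a + b
  have hab : (Xᴴ * Y).trace.re = a + b := by
    have hXH : Xᴴ = Yᴴ * ρ + ρ * Yᴴ := by
      rw [← hY, Matrix.conjTranspose_add, Matrix.conjTranspose_mul, Matrix.conjTranspose_mul,
        hρ.1.eq]
    have ea : (S * Y)ᴴ * (S * Y) = Yᴴ * (ρ * Y) := by
      rw [Matrix.conjTranspose_mul, hSH, Matrix.mul_assoc, hρS]
    have eb : ((Y * S)ᴴ * (Y * S)).trace = (ρ * (Yᴴ * Y)).trace := by
      rw [Matrix.conjTranspose_mul, hSH, Matrix.mul_assoc, cycle3 S Yᴴ (Y * S),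
        Matrix.mul_assoc Y S (S * Yᴴ), hρS, cycle3 Y ρ Yᴴ, cycle3 Yᴴ Y ρ]
    rw [hXH, Matrix.add_mul, Matrix.trace_add, Complex.add_re, hadef, hbdef, ea, eb,
      Matrix.mul_assoc, Matrix.mul_assoc]
  -- finish
  have tN : ((h.1.eigenvectorUnitary : Matrix (Fin d) (Fin d) ℂ) *
      Matrix.diagonal (((↑) : ℝ → ℂ) ∘ Real.sqrt ∘ h.1.eigenvalues) *
      (star h.1.eigenvectorUnitary : Matrix (Fin d) (Fin d) ℂ)).trace.re = ∑ i, s i := by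
    rw [hsqrt, Matrix.trace_mul_cycle, hVl, Matrix.one_mul,
      Matrix.trace_diagonal, ← Complex.ofReal_sum, Complex.ofReal_re]
  rw [tN, hab]
  have hs0 : 0 ≤ ∑ i, s i := Finset.sum_nonneg fun i _ => Real.sqrt_nonneg _
  nlinarith [Real.sq_sqrt ha, Real.sq_sqrt hb, Real.sqrt_nonneg a, Real.sqrt_nonneg b,
    sq_nonneg (Real.sqrt a - Real.sqrt b), tbound, hs0]
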